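/- Strong centering fails: there exists a model (S, U) and a formula φ such that S satisfies φ but Closest(φ, S, U) ≠ {S}. Concretely, with U = {S, S'}, S = (∅, {p}) and S' = ({p}, {p}), the state S satisfies the atom p, yet Closest(p, S, U) = {S, S'}. -/

import Mathlib

/-- Propositional formulas over atoms of type `α`. -/
inductive PForm (α : Type) : Type
  | atom (a : α) : PForm α
  | top : PForm α
  | neg (φ : PForm α) : PForm α
  | conj (φ ψ : PForm α) : PForm α
  | biimp (φ ψ : PForm α) : PForm α

/-- Truth of a propositional formula in a valuation `V`. -/
def PForm.eval {α : Type} (V : Set α) : PForm α → Prop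
  | .atom a => a ∈ V
  | .top => True
  | .neg φ => ¬ φ.eval V
  | .conj φ ψ => φ.eval V ∧ ψ.eval V
  | .biimp φ ψ => (φ.eval V ↔ ψ.eval V)

/-- A state: a causal base together with a compatible valuation. -/
structure State (α : Type) where
  base : Set (PForm α)
  val : Set α
  compat : ∀ ω ∈ base, ω.eval val

/-- `simLE S S'' S'` means `S'' ⪯_S S'` : `S'` is at least as similar to `S` as `S''` is. -/
def simLE {α : Type} (S S'' S' : State α) : Prop :=
  (S.base ∩ S''.base) ⊆ (S.base ∩ S'.base) ∧
    (symmDiff S.val S'.val) ⊆ (symmDiff S.val S''.val)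

/-- `simLT S S' S''` means `S' ≺_S S''`. -/
def simLT {α : Type} (S S' S'' : State α) : Prop :=
  simLE S S' S'' ∧ ¬ simLE S S'' S'

/-- The set of `P`-closest states to `S` relative to context `U`. -/
def Closest {α : Type} (P : Set (State α)) (S : State α) (U : Set (State α)) :
    Set (State α) :=
  {S' ∈ U | S' ∈ P ∧ ¬ ∃ S'' ∈ U, S'' ∈ P ∧ simLT S S' S''}

/-- The state `(∅, {0})`. -/
def Sex : State ℕ :=
  ⟨∅, {0}, fun ω h => absurd h (Set.notMem_empty ω)⟩

/-- The state `({p}, {p})` with `p` the atom `0`. -/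
def Sex' : State ℕ :=
  ⟨{PForm.atom 0}, {0}, by
    intro ω hω
    simp only [Set.mem_singleton_iff] at hω
    subst hω
    simp [PForm.eval]⟩

lemma simLE_of_mem {S' S'' : State ℕ} (h' : S' ∈ ({Sex, Sex'} : Set (State ℕ)))
    (h'' : S'' ∈ ({Sex, Sex'} : Set (State ℕ))) : simLE Sex S'' S' := by
  have v' : S'.val = {0} := by rcases h' with h | h <;> subst h <;> rfl
  have v'' : S''.val = {0} := by rcases h'' with h | h <;> subst h <;> rfl
  constructor
  · show Sex.base ∩ _ ⊆ _
    simp [Sex]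
  · rw [v', v'']

theorem strong_centering_fails :
    (0 : ℕ) ∈ Sex.val ∧
    Closest {T : State ℕ | 0 ∈ T.val} Sex {Sex, Sex'} = {Sex, Sex'} ∧
    Closest {T : State ℕ | 0 ∈ T.val} Sex {Sex, Sex'} ≠ {Sex} := by
  refine ⟨rfl, ?_, ?_⟩
  · ext T
    simp only [Closest, Set.mem_setOf_eq, Set.mem_sep_iff]
    constructor
    · rintro ⟨hU, _, _⟩; exact hU
    · intro hU
      have hT : (0 : ℕ) ∈ T.val := by
        rcases hU with h | h <;> subst h <;> exact rfl
      refine ⟨hU, hT, ?_⟩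
      rintro ⟨S'', hU'', _, _, hnot⟩
      exact hnot (simLE_of_mem hU hU'')
  · intro h
    have : Sex' ∈ ({Sex} : Set (State ℕ)) := by
      rw [← h]
      refine ⟨Or.inr rfl, rfl, ?_⟩
      rintro ⟨S'', hU'', _, _, hnot⟩
      exact hnot (simLE_of_mem (Or.inr rfl) hU'')
    have : Sex' = Sex := this
    have : Sex'.base = Sex.base := by rw [this]
    have : (PForm.atom 0 : PForm ℕ) ∈ (∅ : Set (PForm ℕ)) := by
      rw [← show Sex.base = ∅ from rfl, ← this]; exact rfl
    exact this
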